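/- Let n ≥ 1 be an integer, let q be a real number with q > 0 and q ≠ 1, and let A_0, ..., A_n be complex numbers such that the polynomial W(x,y) = Σ_{i=0}^{n} A_i x^{2(n-i)+1} y^{2i} satisfies W((x+(q-1)y)/√q, (x-y)/√q) = -W(x,y) identically. Then for every ν = 0, 1, ..., 2n+1 one has Σ_{i=0}^{⌊(2n+1-ν)/2⌋} binom(2n+1-2i, ν) A_i = -q^{n-ν+1/2} Σ_{i=0}^{⌊ν/2⌋} binom(2n+1-2i, 2n+1-ν) A_i, where ⌊x⌋ is the greatest integer not exceeding x. -/

import Mathlib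

open Polynomial Finset


/-- Corollary 2.3: binomial moment identities for an odd-degree formal weight
enumerator `W(x,y) = ∑_{i=0}^n A_i x^{2(n-i)+1} y^{2i}` divisible by two, with
`W^{σ_q}(x,y) = -W(x,y)`:
`∑_{i=0}^{⌊(2n+1-ν)/2⌋} C(2n+1-2i,ν) A_i
   = -q^{n-ν+1/2} ∑_{i=0}^{⌊ν/2⌋} C(2n+1-2i,2n+1-ν) A_i`
for `ν = 0, 1, …, 2n+1`.  (Here `q^{n-ν+1/2}` is written as `(√q)^{2n-2ν+1}`.) -/
theorem binomial_moments_odd_deg (n : ℕ) (hn : 1 ≤ n) (q : ℝ) (hq0 : 0 < q) (hq1 : q ≠ 1)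
    (A : ℕ → ℂ)
    (hW : ∀ x y : ℂ,
      (∑ i ∈ Finset.range (n + 1),
        A i * ((x + ((q : ℂ) - 1) * y) / (Real.sqrt q : ℂ)) ^ (2 * (n - i) + 1) *
          ((x - y) / (Real.sqrt q : ℂ)) ^ (2 * i))
        = -∑ i ∈ Finset.range (n + 1), A i * x ^ (2 * (n - i) + 1) * y ^ (2 * i)) :
    ∀ ν : ℕ, ν ≤ 2 * n + 1 →
      ∑ i ∈ Finset.range ((2 * n + 1 - ν) / 2 + 1), ((2 * n + 1 - 2 * i).choose ν : ℂ) * A i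
        = -((Real.sqrt q : ℂ)) ^ (2 * (n : ℤ) - 2 * (ν : ℤ) + 1) *
            ∑ i ∈ Finset.range (ν / 2 + 1),
              ((2 * n + 1 - 2 * i).choose (2 * n + 1 - ν) : ℂ) * A i := by
  intro ν hν
  set s : ℂ := (Real.sqrt q : ℂ) with hs
  have hs2 : s ^ 2 = (q : ℂ) := by
    rw [hs]; norm_cast; exact Real.sq_sqrt hq0.le
  have hs0 : s ≠ 0 := by
    rw [hs]; norm_cast; exact (Real.sqrt_pos.mpr hq0).ne'
  set P : Polynomial ℂ :=
    ∑ i ∈ Finset.range (n+1), C (A i) * (X + 1) ^ (2*(n-i)+1) with hP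
  set Q : Polynomial ℂ :=
    ∑ i ∈ Finset.range (n+1), C (A i) * (X + C ((q:ℂ))) ^ (2*(n-i)+1) * X ^ (2*i) with hQ
  have key : C (s ^ (2*n+1)) * P = -Q := by
    apply Polynomial.funext
    intro t
    have h := hW (s + t / s) (t / s)
    have e1 : (s + t/s + ((q:ℂ)-1) * (t/s)) / s = 1 + t := by
      rw [← hs2]; field_simp; ring
    have e2 : (s + t/s - t/s) / s = 1 := by
      field_simp; ring
    rw [e1, e2] at h
    simp only [hP, hQ, eval_mul, eval_C, eval_neg, eval_finset_sum, eval_pow, eval_add,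
      eval_X, eval_one, Finset.mul_sum]
    rw [show (∑ i ∈ Finset.range (n+1), s ^ (2*n+1) * (A i * (t + 1) ^ (2*(n-i)+1)))
        = ∑ i ∈ Finset.range (n+1), s ^ (2*n+1) * (A i * (1 + t) ^ (2*(n-i)+1) * 1 ^ (2*i)) by
        apply Finset.sum_congr rfl; intro i _; ring,
      ← Finset.mul_sum, h]
    rw [mul_neg, neg_inj, Finset.mul_sum]
    apply Finset.sum_congr rfl
    intro i hi
    simp only [Finset.mem_range] at hi
    have hmi : 2*(n-i)+1 + 2*i = 2*n+1 := by omega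
    have e3 : s + t/s = (s^2+t)/s := by field_simp
    rw [← hs2, e3, div_pow, div_pow, ← hmi, pow_add]
    field_simp
    try ring
    try tauto
  have hc := congrArg (fun p => Polynomial.coeff p ν) key
  simp only [coeff_C_mul, coeff_neg, hP, hQ, finset_sum_coeff, coeff_mul_X_pow',
    coeff_X_add_one_pow, coeff_C_mul, coeff_X_add_C_pow] at hc
  -- hc : s^(2n+1) * ∑ A i * choose (2(n-i)+1) ν
  --        = -∑ if 2i ≤ ν then A i * (q^(2(n-i)+1 - (ν-2i)) * choose (2(n-i)+1) (ν-2i)) else 0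
  -- Left sum: extend to range (n+1)
  have hsubL : Finset.range ((2*n+1-ν)/2 + 1) ⊆ Finset.range (n+1) := by
    exact Finset.range_subset_range.mpr (by omega)
  have hL : ∑ i ∈ Finset.range ((2*n+1-ν)/2 + 1), ((2*n+1-2*i).choose ν : ℂ) * A i
      = ∑ i ∈ Finset.range (n+1), A i * (((2*(n-i)+1).choose ν : ℂ)) := by
    rw [show (∑ i ∈ Finset.range ((2*n+1-ν)/2 + 1), ((2*n+1-2*i).choose ν : ℂ) * A i)
        = ∑ i ∈ Finset.range ((2*n+1-ν)/2 + 1), A i * (((2*(n-i)+1).choose ν : ℂ)) by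
      apply Finset.sum_congr rfl
      intro i hi
      simp only [Finset.mem_range] at hi
      rw [show 2*(n-i)+1 = 2*n+1-2*i by omega]
      ring]
    apply Finset.sum_subset hsubL
    intro i hi1 hi2
    simp only [Finset.mem_range] at hi1 hi2
    have : 2*(n-i)+1 < ν := by omega
    simp [Nat.choose_eq_zero_of_lt this]
  have hsubR : Finset.range (ν/2 + 1) ⊆ Finset.range (n+1) := by
    exact Finset.range_subset_range.mpr (by omega)
  have hR : (∑ i ∈ Finset.range (n+1),
        if 2*i ≤ ν then A i * ((q:ℂ) ^ (2*(n-i)+1 - (ν-2*i)) * (((2*(n-i)+1).choose (ν-2*i) : ℂ))) else 0)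
      = (q:ℂ) ^ (2*n+1-ν) * ∑ i ∈ Finset.range (ν/2 + 1),
          ((2*n+1-2*i).choose (2*n+1-ν) : ℂ) * A i := by
    rw [Finset.mul_sum]
    have step1 : (∑ i ∈ Finset.range (ν/2 + 1),
          if 2*i ≤ ν then A i * ((q:ℂ) ^ (2*(n-i)+1 - (ν-2*i)) * (((2*(n-i)+1).choose (ν-2*i) : ℂ))) else 0)
        = ∑ i ∈ Finset.range (n+1),
          if 2*i ≤ ν then A i * ((q:ℂ) ^ (2*(n-i)+1 - (ν-2*i)) * (((2*(n-i)+1).choose (ν-2*i) : ℂ))) else 0 := by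
      apply Finset.sum_subset hsubR
      intro i hi1 hi2
      simp only [Finset.mem_range] at hi1 hi2
      rw [if_neg (by omega)]
    rw [← step1]
    apply Finset.sum_congr rfl
    intro i hi
    simp only [Finset.mem_range] at hi
    have h2i : 2*i ≤ ν := by omega
    have hin : i ≤ n := by omega
    rw [if_pos h2i]
    have hexp : 2*(n-i)+1 - (ν-2*i) = 2*n+1-ν := by omega
    have hch : (2*(n-i)+1).choose (ν-2*i) = (2*n+1-2*i).choose (2*n+1-ν) := by
      rw [show 2*(n-i)+1 = 2*n+1-2*i by omega, ← Nat.choose_symm (by omega : ν-2*i ≤ 2*n+1-2*i),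
        show 2*n+1-2*i - (ν-2*i) = 2*n+1-ν by omega]
    rw [hexp, hch]
    ring
  rw [hR] at hc
  -- relate the square-root powers
  have hz : s ^ (2*(n:ℤ) - 2*(ν:ℤ) + 1) * s ^ (2*n+1 : ℕ) = (q:ℂ) ^ (2*n+1-ν) := by
    rw [← hs2, ← pow_mul, ← zpow_natCast s (2*n+1), ← zpow_natCast s (2*(2*n+1-ν)),
      ← zpow_add₀ hs0]
    congr 1
    have : ((2*n+1-ν : ℕ) : ℤ) = 2*(n:ℤ)+1-ν := by omega
    push_cast [this]
    ring
  have hpow : (s : ℂ) ^ (2*n+1 : ℕ) ≠ 0 := pow_ne_zero _ hs0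
  apply mul_left_cancel₀ hpow
  rw [hL]
  rw [hc]
  rw [show s ^ (2*n+1:ℕ) * (-s ^ (2*(n:ℤ) - 2*(ν:ℤ) + 1) *
      ∑ i ∈ Finset.range (ν/2 + 1), ((2*n+1-2*i).choose (2*n+1-ν) : ℂ) * A i)
    = -((s ^ (2*(n:ℤ) - 2*(ν:ℤ) + 1) * s ^ (2*n+1:ℕ)) *
      ∑ i ∈ Finset.range (ν/2 + 1), ((2*n+1-2*i).choose (2*n+1-ν) : ℂ) * A i) by ring]
  rw [hz]
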